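/- Let $\ell$ be a loss function with conjugate $g = \ell^*$, let $x^0 \in \mathrm{int}\,\ell(\mathbb{R})$ and $X \in L^\infty$. Then $\rho_\ell(X) = \sup_{\lambda > 0}\big( \inf_{s \in \mathbb{R}}\big(s + \lambda \mathbb{E}[\ell(-X-s)]\big) - \lambda x^0 \big)$, where $\rho_\ell(X) = \inf\{s \in \mathbb{R} \mid \mathbb{E}[\ell(-X-s)] \le x^0\}$. That is, strong Lagrangian duality holds for the shortfall risk minimization problem. -/

import Mathlib

open MeasureTheory Set Filter
open scoped Pointwise

noncomputable section

/-- Legendre-Fenchel conjugate of an `ℝ ∪ {+∞}`-valued function on `ℝ`. -/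
def fconj (f : ℝ → EReal) (y : ℝ) : EReal := ⨆ x : ℝ, ((x * y : ℝ) : EReal) - f x

/-- Convexity for an `ℝ ∪ {+∞}`-valued function on `ℝ`. -/
def ERealConvexOn (f : ℝ → EReal) : Prop :=
  ∀ x y a b : ℝ, 0 ≤ a → 0 ≤ b → a + b = 1 →
    f (a * x + b * y) ≤ (a : EReal) * f x + (b : EReal) * f y

/-- A loss function: nondecreasing, convex, lower semicontinuous, finite at `0`,
not identically constant on its effective domain, with values in `ℝ ∪ {+∞}`. -/
structure IsLossFunction (f : ℝ → EReal) : Prop where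
  ne_bot : ∀ x, f x ≠ ⊥
  mono : Monotone f
  convex : ERealConvexOn f
  lsc : LowerSemicontinuous f
  finite_at_zero : f 0 ≠ ⊤
  nonconst : ∃ x y, f x ≠ ⊤ ∧ f y ≠ ⊤ ∧ f x ≠ f y

open Classical in
/-- Expectation of an `ℝ ∪ {+∞}`-valued random variable: the integral if the variable is
(a.e. finite and) integrable, and `+∞` otherwise. -/
def eexp {Ω : Type*} [MeasurableSpace Ω] (μ : Measure Ω) (g : Ω → EReal) : EReal :=
  if Integrable (fun ω => (g ω).toReal) μ ∧ (∀ᵐ ω ∂μ, g ω ≠ ⊤) then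
    ((∫ ω, (g ω).toReal ∂μ : ℝ) : EReal) else ⊤


/-- The scalar shortfall risk measure `ρ_ℓ(X) = inf {s | E[ℓ(-X-s)] ≤ x⁰}`. -/
def shortfallRho {Ω : Type*} [MeasurableSpace Ω] (μ : Measure Ω) (ℓ : ℝ → EReal) (x0 : ℝ)
    (X : Ω → ℝ) : ℝ :=
  sInf {s : ℝ | eexp μ (fun ω => ℓ (-X ω - s)) ≤ (x0 : EReal)}

section AuxEExp
variable {Ω : Type*} [MeasurableSpace Ω] {μ : Measure Ω}

private lemma eexp_ne_bot' (g : Ω → EReal) : eexp μ g ≠ ⊥ := by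
  unfold eexp; split_ifs <;> simp

private lemma of_eexp_ne_top' {g : Ω → EReal} (h : eexp μ g ≠ ⊤) :
    Integrable (fun ω => (g ω).toReal) μ ∧ (∀ᵐ ω ∂μ, g ω ≠ ⊤) ∧
      eexp μ g = ((∫ ω, (g ω).toReal ∂μ : ℝ) : EReal) := by
  unfold eexp at h ⊢
  split_ifs at h ⊢ with hc
  · exact ⟨hc.1, hc.2, rfl⟩
  · exact absurd rfl h

private lemma le_eexp' [IsProbabilityMeasure μ] {g : Ω → EReal} {c : EReal}
    (hc : ∀ᵐ ω ∂μ, c ≤ g ω) : c ≤ eexp μ g := by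
  unfold eexp
  split_ifs with hcond
  · obtain ⟨hint, hfin⟩ := hcond
    induction c with
    | bot => exact bot_le
    | top =>
      haveI : (ae μ).NeBot := ae_neBot.2 (IsProbabilityMeasure.ne_zero μ)
      obtain ⟨ω, h1, h2⟩ := (hc.and hfin).exists
      exact absurd (top_le_iff.1 h1) h2
    | coe c =>
      have hae : ∀ᵐ ω ∂μ, c ≤ (g ω).toReal := by
        filter_upwards [hc, hfin] with ω h1 h2
        have hb : g ω ≠ ⊥ := fun hb => by simp [hb] at h1
        have := EReal.toReal_le_toReal h1 (EReal.coe_ne_bot c) h2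
        simpa using this
      have : (∫ _ω, c ∂μ) ≤ ∫ ω, (g ω).toReal ∂μ :=
        integral_mono_ae (integrable_const c) hint hae
      rw [integral_const, probReal_univ] at this
      simp only [ENNReal.toReal_one, one_smul] at this
      exact_mod_cast this
  · exact le_top

private lemma eexp_le_coe' [IsProbabilityMeasure μ] {g : Ω → EReal} (hg : Measurable g)
    {lo hi : ℝ} (hlo : ∀ᵐ ω ∂μ, (lo : EReal) ≤ g ω) (hhi : ∀ᵐ ω ∂μ, g ω ≤ (hi : EReal)) :
    eexp μ g ≤ (hi : EReal) := by
  have hfin : ∀ᵐ ω ∂μ, g ω ≠ ⊤ := by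
    filter_upwards [hhi] with ω h1
    exact fun ht => by simp [ht] at h1
  have haebd : ∀ᵐ ω ∂μ, ‖(g ω).toReal‖ ≤ max |lo| |hi| := by
    filter_upwards [hlo, hhi, hfin] with ω h1 h2 h3
    have hb : g ω ≠ ⊥ := fun hb => by simp [hb] at h1
    have l1 : lo ≤ (g ω).toReal := by
      have := EReal.toReal_le_toReal h1 (EReal.coe_ne_bot lo) h3; simpa using this
    have l2 : (g ω).toReal ≤ hi := by
      have := EReal.toReal_le_toReal h2 hb (EReal.coe_ne_top hi); simpa using this
    rw [Real.norm_eq_abs, abs_le]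
    constructor
    · calc -max |lo| |hi| ≤ -|lo| := by simp
        _ ≤ lo := neg_abs_le lo
        _ ≤ _ := l1
    · exact l2.trans ((le_abs_self hi).trans (le_max_right _ _))
  have hint : Integrable (fun ω => (g ω).toReal) μ :=
    (integrable_const (max |lo| |hi|)).mono' hg.ereal_toReal.aestronglyMeasurable haebd
  unfold eexp
  rw [if_pos ⟨hint, hfin⟩]
  have hae : ∀ᵐ ω ∂μ, (g ω).toReal ≤ hi := by
    filter_upwards [hlo, hhi, hfin] with ω h1 h2 h3
    have hb : g ω ≠ ⊥ := fun hb => by simp [hb] at h1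
    have := EReal.toReal_le_toReal h2 hb (EReal.coe_ne_top hi); simpa using this
  have : (∫ ω, (g ω).toReal ∂μ) ≤ ∫ _ω, hi ∂μ :=
    integral_mono_ae hint (integrable_const hi) hae
  rw [integral_const, probReal_univ] at this
  simp only [ENNReal.toReal_one, one_smul] at this
  exact_mod_cast this

private lemma eexp_convex' [IsProbabilityMeasure μ] {gm g1 g2 : Ω → EReal} (hm : Measurable gm)
    {c : EReal} (hcbot : c ≠ ⊥) (hlb : ∀ᵐ ω ∂μ, c ≤ gm ω)
    {a b : ℝ} (_ha : 0 < a) (_hb : 0 < b)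
    (h1 : eexp μ g1 ≠ ⊤) (h2 : eexp μ g2 ≠ ⊤)
    (hg1bot : ∀ ω, g1 ω ≠ ⊥) (hg2bot : ∀ ω, g2 ω ≠ ⊥)
    (hcomb : ∀ᵐ ω ∂μ, gm ω ≤ (a : EReal) * g1 ω + (b : EReal) * g2 ω) :
    eexp μ gm ≤ (a : EReal) * eexp μ g1 + (b : EReal) * eexp μ g2 := by
  obtain ⟨hint1, hfin1, heq1⟩ := of_eexp_ne_top' h1
  obtain ⟨hint2, hfin2, heq2⟩ := of_eexp_ne_top' h2
  have hub : ∀ᵐ ω ∂μ, gm ω ≤ ((a * (g1 ω).toReal + b * (g2 ω).toReal : ℝ) : EReal) := by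
    filter_upwards [hcomb, hfin1, hfin2] with ω hc h1' h2'
    obtain ⟨r1, e1⟩ : ∃ r : ℝ, g1 ω = (r : EReal) :=
      ⟨(g1 ω).toReal, (EReal.coe_toReal h1' (hg1bot ω)).symm⟩
    obtain ⟨r2, e2⟩ : ∃ r : ℝ, g2 ω = (r : EReal) :=
      ⟨(g2 ω).toReal, (EReal.coe_toReal h2' (hg2bot ω)).symm⟩
    calc gm ω ≤ (a : EReal) * g1 ω + (b : EReal) * g2 ω := hc
      _ = _ := by
        rw [e1, e2]
        simp only [EReal.toReal_coe, ← EReal.coe_mul, ← EReal.coe_add]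
  have hfinm : ∀ᵐ ω ∂μ, gm ω ≠ ⊤ := by
    filter_upwards [hub] with ω h
    intro ht
    rw [ht, top_le_iff] at h
    exact EReal.coe_ne_top _ h
  haveI : (ae μ).NeBot := ae_neBot.2 (IsProbabilityMeasure.ne_zero μ)
  have hcne : c ≠ ⊤ := by
    obtain ⟨ω, hω1, hω2⟩ := (hlb.and hfinm).exists
    exact fun hct => hω2 (top_le_iff.1 (hct ▸ hω1))
  set lo : ℝ := c.toReal with hlo
  have hcc : c = (lo : EReal) := (EReal.coe_toReal hcne hcbot).symm
  have hmbot : ∀ᵐ ω ∂μ, gm ω ≠ ⊥ := by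
    filter_upwards [hlb] with ω h
    exact fun hbb => hcbot (le_bot_iff.1 (hbb ▸ h))
  have hrb : ∀ᵐ ω ∂μ, lo ≤ (gm ω).toReal ∧
      (gm ω).toReal ≤ a * (g1 ω).toReal + b * (g2 ω).toReal := by
    filter_upwards [hlb, hub, hfinm, hmbot] with ω hl hu hf hbb
    constructor
    · have := EReal.toReal_le_toReal (hcc ▸ hl) (EReal.coe_ne_bot lo) hf
      simpa using this
    · have := EReal.toReal_le_toReal hu hbb (EReal.coe_ne_top _)
      rwa [EReal.toReal_coe] at this
  have hdom : Integrable (fun ω => |a * (g1 ω).toReal + b * (g2 ω).toReal| + |lo|) μ :=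
    (((hint1.const_mul a).add (hint2.const_mul b)).abs).add (integrable_const _)
  have hintm : Integrable (fun ω => (gm ω).toReal) μ := by
    refine hdom.mono' hm.ereal_toReal.aestronglyMeasurable ?_
    filter_upwards [hrb] with ω ⟨hl, hu⟩
    rw [Real.norm_eq_abs, abs_le]
    constructor
    · have h0 : -(|a * (g1 ω).toReal + b * (g2 ω).toReal| + |lo|) ≤ -|lo| := by
        simp [abs_nonneg]
      calc -(|a * (g1 ω).toReal + b * (g2 ω).toReal| + |lo|) ≤ -|lo| := h0
        _ ≤ lo := neg_abs_le lo
        _ ≤ _ := hl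
    · exact hu.trans ((le_abs_self _).trans (by simp [abs_nonneg]))
  have hIm : (∫ ω, (gm ω).toReal ∂μ)
      ≤ a * (∫ ω, (g1 ω).toReal ∂μ) + b * (∫ ω, (g2 ω).toReal ∂μ) := by
    have hmono : (∫ ω, (gm ω).toReal ∂μ)
        ≤ ∫ ω, (a * (g1 ω).toReal + b * (g2 ω).toReal) ∂μ := by
      refine integral_mono_ae hintm ((hint1.const_mul a).add (hint2.const_mul b)) ?_
      filter_upwards [hrb] with ω h; exact h.2
    rwa [integral_add (hint1.const_mul a) (hint2.const_mul b),
      integral_const_mul, integral_const_mul] at hmono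
  have heqm : eexp μ gm = ((∫ ω, (gm ω).toReal ∂μ : ℝ) : EReal) := by
    unfold eexp; rw [if_pos ⟨hintm, hfinm⟩]
  rw [heqm, heq1, heq2, ← EReal.coe_mul, ← EReal.coe_mul, ← EReal.coe_add]
  exact_mod_cast hIm

end AuxEExp

set_option maxHeartbeats 2000000 in
/-- Strong Lagrangian duality for the shortfall risk measure:
`ρ_ℓ(X) = sup_{λ>0} ( inf_s (s + λ E[ℓ(-X-s)]) - λ x⁰ )`. -/
theorem shortfall_lagrangian_duality {Ω : Type*} [MeasurableSpace Ω]
    (μ : Measure Ω) [IsProbabilityMeasure μ]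
    (ℓ : ℝ → EReal) (hℓ : IsLossFunction ℓ)
    (x0 : ℝ) (hx0 : (x0 : EReal) ∈ interior (Set.range ℓ))
    (X : Ω → ℝ) (hX : Measurable X) (K : ℝ) (hXb : ∀ᵐ ω ∂μ, |X ω| ≤ K) :
    ((shortfallRho μ ℓ x0 X : ℝ) : EReal) =
      ⨆ lam ∈ Set.Ioi (0 : ℝ),
        ((⨅ s : ℝ, ((s : EReal) + (lam : EReal) * eexp μ (fun ω => ℓ (-X ω - s))))
          - ((lam * x0 : ℝ) : EReal)) := by
  haveI : (ae μ).NeBot := ae_neBot.2 (IsProbabilityMeasure.ne_zero μ)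
  set F : ℝ → EReal := fun s => eexp μ (fun ω => ℓ (-X ω - s)) with hFdef
  set A : Set ℝ := {s : ℝ | F s ≤ (x0 : EReal)} with hAdef
  have hρdef : shortfallRho μ ℓ x0 X = sInf A := rfl
  -- basic constants
  have hK0 : 0 ≤ K := by
    obtain ⟨ω, hω⟩ := hXb.exists
    exact (abs_nonneg _).trans hω
  -- points of the range of ℓ around x0
  have hnhds : Set.range ℓ ∈ nhds ((x0 : ℝ) : EReal) := mem_interior_iff_mem_nhds.1 hx0
  obtain ⟨l, r, hxlr, hlr⟩ :=
    (mem_nhds_iff_exists_Ioo_subset' ⟨⊥, bot_lt_iff_ne_bot.2 (EReal.coe_ne_bot x0)⟩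
      ⟨⊤, lt_top_iff_ne_top.2 (EReal.coe_ne_top x0)⟩).1 hnhds
  obtain ⟨u, hul, hux'⟩ := EReal.exists_between_coe_real hxlr.1
  obtain ⟨v, hxv', hvr⟩ := EReal.exists_between_coe_real hxlr.2
  have hux : u < x0 := by exact_mod_cast hux'
  have hxv : x0 < v := by exact_mod_cast hxv'
  obtain ⟨t_u, hu⟩ : (u : EReal) ∈ Set.range ℓ := hlr ⟨hul, hux'.trans hxlr.2⟩
  obtain ⟨t_v, hv⟩ : (v : EReal) ∈ Set.range ℓ := hlr ⟨hxlr.1.trans hxv', hvr⟩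
  have htuv : t_u < t_v := by
    by_contra hcon
    rw [not_lt] at hcon
    have := hℓ.mono hcon
    rw [hu, hv] at this
    have : v ≤ u := by exact_mod_cast this
    linarith
  -- measurability
  have hmg : ∀ s : ℝ, Measurable (fun ω => ℓ (-X ω - s)) := fun s =>
    hℓ.mono.measurable.comp ((hX.neg).sub_const s)
  -- a.e. bounds
  have hbd : ∀ s : ℝ, ∀ᵐ ω ∂μ, ℓ (-K - s) ≤ ℓ (-X ω - s) ∧ ℓ (-X ω - s) ≤ ℓ (K - s) := by
    intro s
    filter_upwards [hXb] with ω hω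
    rw [abs_le] at hω
    exact ⟨hℓ.mono (by linarith), hℓ.mono (by linarith)⟩
  have hFbot : ∀ s : ℝ, F s ≠ ⊥ := fun s => eexp_ne_bot' _
  have hF_ge : ∀ s : ℝ, ℓ (-K - s) ≤ F s := fun s =>
    le_eexp' ((hbd s).mono fun ω h => h.1)
  have hF_le : ∀ s hi : ℝ, ℓ (K - s) = (hi : EReal) → F s ≤ (hi : EReal) := by
    intro s hi hhi
    have hlone : ℓ (-K - s) ≠ ⊤ := by
      intro ht
      have := hℓ.mono (show -K - s ≤ K - s by linarith)
      rw [ht, hhi, top_le_iff] at this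
      exact EReal.coe_ne_top hi this
    obtain ⟨lo, hloe⟩ : ∃ lo : ℝ, ℓ (-K - s) = (lo : EReal) :=
      ⟨_, (EReal.coe_toReal hlone (hℓ.ne_bot _)).symm⟩
    refine eexp_le_coe' (hmg s) (lo := lo) ?_ ?_
    · filter_upwards [hbd s] with ω h
      exact hloe ▸ h.1
    · filter_upwards [hbd s] with ω h
      exact hhi ▸ h.2
  have hFfin_lb : ∀ s : ℝ, F s ≠ ⊤ → ℓ (-K - s) ≠ ⊤ := by
    intro s hs
    obtain ⟨_, hfin, _⟩ := of_eexp_ne_top' hs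
    obtain ⟨ω, h1, h2⟩ := ((hbd s).and hfin).exists
    exact fun ht => h2 (top_le_iff.1 (ht ▸ h1.1))
  -- Slater point
  have hFsbar : F (K - t_u) ≤ (u : EReal) := by
    refine hF_le (K - t_u) u ?_
    rw [show K - (K - t_u) = t_u by ring, hu]
  have hsbarA : (K - t_u) ∈ A := hFsbar.trans (by exact_mod_cast hux.le)
  have hAne : A.Nonempty := ⟨K - t_u, hsbarA⟩
  have hAbdd : BddBelow A := by
    refine ⟨-K - t_v, fun s hs => ?_⟩
    by_contra hcon
    rw [not_le] at hcon
    have h1 : (v : EReal) ≤ ℓ (-K - s) := by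
      rw [← hv]; exact hℓ.mono (by linarith)
    have h2 : (v : EReal) ≤ (x0 : EReal) := (h1.trans (hF_ge s)).trans hs
    have : v ≤ x0 := by exact_mod_cast h2
    linarith
  have hρ_le : ∀ s ∈ A, sInf A ≤ s := fun s hs => csInf_le hAbdd hs
  have hnotA : ∀ s : ℝ, s < sInf A → (x0 : EReal) < F s := by
    intro s hs
    by_contra hcon
    rw [not_lt] at hcon
    exact absurd (hρ_le s hcon) (not_le.2 hs)
  -- convexity of F (both values finite)
  have hFconv : ∀ s t a b : ℝ, 0 < a → 0 < b → a + b = 1 → F s ≠ ⊤ → F t ≠ ⊤ →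
      F (a * s + b * t) ≤ (a : EReal) * F s + (b : EReal) * F t := by
    intro s t a b ha hb hab hFs hFt
    refine eexp_convex' (hmg _) (hℓ.ne_bot (-K - (a * s + b * t)))
      ((hbd _).mono fun ω h => h.1) ha hb hFs hFt
      (fun ω => hℓ.ne_bot _) (fun ω => hℓ.ne_bot _) ?_
    refine Eventually.of_forall fun ω => ?_
    have harg : -X ω - (a * s + b * t) = a * (-X ω - s) + b * (-X ω - t) := by
      linear_combination (X ω) * hab
    rw [harg]
    exact hℓ.convex (-X ω - s) (-X ω - t) a b ha.le hb.le hab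
  -- lower affine-type bound on ℓ
  set m0 : ℝ := (v - u) / (t_v - t_u) with hm0def
  have hm0 : 0 < m0 := div_pos (by linarith) (by linarith)
  have hℓlb : ∀ t : ℝ, ((u + m0 * min (t - t_u) 0 : ℝ) : EReal) ≤ ℓ t := by
    intro t
    rcases le_or_gt t_u t with h | h
    · rw [min_eq_right (by linarith : (0 : ℝ) ≤ t - t_u), mul_zero, add_zero, ← hu]
      exact hℓ.mono h
    · by_cases htop : ℓ t = ⊤
      · rw [htop]; exact le_top
      obtain ⟨w, hw⟩ : ∃ w : ℝ, ℓ t = (w : EReal) :=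
        ⟨_, (EReal.coe_toReal htop (hℓ.ne_bot t)).symm⟩
      have hne : t_v - t ≠ 0 := ne_of_gt (by linarith)
      have hab : (t_v - t_u) / (t_v - t) + (t_u - t) / (t_v - t) = 1 := by
        field_simp
        ring
      have h2 := hℓ.convex t t_v ((t_v - t_u) / (t_v - t)) ((t_u - t) / (t_v - t))
        (div_nonneg (by linarith : (0:ℝ) ≤ t_v - t_u) (by linarith : (0:ℝ) ≤ t_v - t))
        (div_nonneg (by linarith : (0:ℝ) ≤ t_u - t) (by linarith : (0:ℝ) ≤ t_v - t)) hab
      have hargeq : (t_v - t_u) / (t_v - t) * t + (t_u - t) / (t_v - t) * t_v = t_u := by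
        field_simp
        ring
      rw [hargeq, hu, hv, hw, ← EReal.coe_mul, ← EReal.coe_mul, ← EReal.coe_add] at h2
      have h2' : u ≤ (t_v - t_u) / (t_v - t) * w + (t_u - t) / (t_v - t) * v := by
        exact_mod_cast h2
      rw [div_mul_eq_mul_div, div_mul_eq_mul_div, ← add_div,
        le_div_iff₀ (by linarith : (0:ℝ) < t_v - t)] at h2'
      rw [min_eq_left (by linarith : t - t_u ≤ (0:ℝ)), hw]
      have hd : (0:ℝ) < t_v - t_u := by linarith
      have hgoal : u + m0 * (t - t_u) ≤ w := by
        have h3 : m0 * (t - t_u) = (v - u) * (t - t_u) / (t_v - t_u) := by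
          rw [hm0def]; ring
        have h4 : (v - u) * (t - t_u) / (t_v - t_u) ≤ w - u := by
          rw [div_le_iff₀ hd]
          nlinarith [h2']
        linarith
      exact_mod_cast hgoal
  -- weak duality
  have hweak : (⨆ lam ∈ Set.Ioi (0:ℝ),
      ((⨅ s : ℝ, ((s : EReal) + (lam : EReal) * F s)) - ((lam * x0 : ℝ) : EReal)))
      ≤ ((sInf A : ℝ) : EReal) := by
    refine iSup₂_le fun lam hlam => ?_
    rw [Set.mem_Ioi] at hlam
    by_contra hcon
    rw [not_le] at hcon
    obtain ⟨c, hc1, hc2⟩ := EReal.exists_between_coe_real hcon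
    have hc1' : sInf A < c := by exact_mod_cast hc1
    obtain ⟨s, hsA, hsc⟩ := exists_lt_of_csInf_lt hAne hc1'
    have hsA' : F s ≤ ((x0 : ℝ) : EReal) := hsA
    have hFtop : F s ≠ ⊤ := fun ht => by
      rw [ht, top_le_iff] at hsA'
      exact EReal.coe_ne_top x0 hsA'
    obtain ⟨r, hFr⟩ : ∃ r : ℝ, F s = (r : EReal) :=
      ⟨_, (EReal.coe_toReal hFtop (hFbot s)).symm⟩
    have hrx : r ≤ x0 := by
      have hh := hsA'
      rw [hFr] at hh
      exact_mod_cast hh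
    have h1 : (⨅ s' : ℝ, ((s' : EReal) + (lam : EReal) * F s')) ≤ ((s + lam * r : ℝ) : EReal) := by
      refine (iInf_le _ s).trans ?_
      rw [hFr, ← EReal.coe_mul, ← EReal.coe_add]
    have h2 : (⨅ s' : ℝ, ((s' : EReal) + (lam : EReal) * F s')) - ((lam * x0 : ℝ) : EReal)
        ≤ ((s + lam * r - lam * x0 : ℝ) : EReal) := by
      rw [EReal.coe_sub]
      exact EReal.sub_le_sub h1 le_rfl
    have h3 : s + lam * r - lam * x0 ≤ c := by nlinarith
    exact absurd (h2.trans (by exact_mod_cast h3)) (not_le.2 hc2)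
  -- strong duality
  have hstrong : ((sInf A : ℝ) : EReal) ≤ ⨆ lam ∈ Set.Ioi (0:ℝ),
      ((⨅ s : ℝ, ((s : EReal) + (lam : EReal) * F s)) - ((lam * x0 : ℝ) : EReal)) := by
    refine le_of_not_gt fun hcon => ?_
    obtain ⟨s0, hc1, hc2⟩ := EReal.exists_between_coe_real hcon
    have hs0ρ : s0 < sInf A := by exact_mod_cast hc2
    have hx0F : (x0 : EReal) < F s0 := hnotA s0 hs0ρ
    set ε : ℝ := sInf A - s0 with hεdef
    have hε : 0 < ε := by rw [hεdef]; linarith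
    -- the slope set
    set Sl : Set ℝ :=
      {q : ℝ | ∃ s : ℝ, s0 < s ∧ F s ≠ ⊤ ∧ q = ((F s).toReal - x0) / (s - s0)} with hSldef
    set Acon : ℝ := |u - x0| + m0 * |K + t_u| + m0 * |s0| with hAcon
    have hAcon0 : 0 ≤ Acon := by
      rw [hAcon]; positivity
    set mlb : ℝ := -(Acon / ε) - m0 with hmlbdef
    have hSlb : ∀ q ∈ Sl, mlb ≤ q := by
      rintro q ⟨s, hss0, hstop, rfl⟩
      have hmlb0 : mlb ≤ 0 := by
        rw [hmlbdef]
        have : 0 ≤ Acon / ε := div_nonneg hAcon0 hε.le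
        linarith
      rcases lt_or_ge s (sInf A) with h | h
      · -- slope is nonnegative here
        have hxF : (x0 : EReal) < F s := hnotA s h
        have hxr : x0 ≤ (F s).toReal := by
          have heq : F s = ((F s).toReal : EReal) := (EReal.coe_toReal hstop (hFbot s)).symm
          rw [heq] at hxF
          exact_mod_cast hxF.le
        exact hmlb0.trans (div_nonneg (by linarith) (by linarith))
      · -- s is at least sInf A, so s - s0 ≥ ε
        have hsε : ε ≤ s - s0 := by rw [hεdef]; linarith
        have hltop : ℓ (-K - s) ≠ ⊤ := hFfin_lb s hstop
        obtain ⟨w, hw⟩ : ∃ w : ℝ, ℓ (-K - s) = (w : EReal) :=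
          ⟨_, (EReal.coe_toReal hltop (hℓ.ne_bot _)).symm⟩
        have h1 : u + m0 * min (-K - s - t_u) 0 ≤ w := by
          have := hℓlb (-K - s)
          rw [hw] at this
          exact_mod_cast this
        have h2 : w ≤ (F s).toReal := by
          have := hF_ge s
          rw [hw] at this
          have := EReal.toReal_le_toReal this (EReal.coe_ne_bot w) hstop
          simpa using this
        rw [le_div_iff₀ (by linarith : (0:ℝ) < s - s0)]
        have hmin : -(|K + t_u| + |s0| + (s - s0)) ≤ min (-K - s - t_u) 0 := by
          have habs : |(-K - s - t_u)| ≤ |K + t_u| + |s0| + (s - s0) := by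
            have h5 : |(-K - s - t_u)| = |K + t_u + s| := by
              rw [show -K - s - t_u = -(K + t_u + s) by ring, abs_neg]
            have h6 : |s| ≤ |s0| + (s - s0) := by
              rw [abs_le]; constructor
              · have : -|s0| ≤ s0 := neg_abs_le s0
                linarith
              · have : s0 ≤ |s0| := le_abs_self s0
                linarith
            calc |(-K - s - t_u)| = |K + t_u + s| := h5
              _ ≤ |K + t_u| + |s| := abs_add_le _ _
              _ ≤ _ := by linarith
          have := neg_abs_le (-K - s - t_u)
          rcases le_or_gt (-K - s - t_u) 0 with h7 | h7
          · rw [min_eq_left h7]; linarith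
          · rw [min_eq_right h7.le]
            have := abs_nonneg (K + t_u)
            have := abs_nonneg s0
            linarith
        have hAde : Acon / ε * ε = Acon := div_mul_cancel₀ _ (ne_of_gt hε)
        have hstep : mlb * (s - s0) ≤ -Acon - m0 * (s - s0) := by
          have h8 : Acon / ε * ε ≤ Acon / ε * (s - s0) :=
            mul_le_mul_of_nonneg_left hsε (div_nonneg hAcon0 hε.le)
          rw [hAde] at h8
          rw [hmlbdef]
          nlinarith
        have hnum : -Acon - m0 * (s - s0) ≤ (F s).toReal - x0 := by
          have h9 : m0 * (-(|K + t_u| + |s0| + (s - s0))) ≤ m0 * min (-K - s - t_u) 0 :=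
            mul_le_mul_of_nonneg_left hmin hm0.le
          have h10 : -|u - x0| ≤ u - x0 := neg_abs_le _
          rw [hAcon]
          nlinarith
        linarith
    have hFsbartop : F (K - t_u) ≠ ⊤ := fun ht => by
      rw [ht, top_le_iff] at hFsbar
      exact EReal.coe_ne_top u hFsbar
    have hsbar0 : s0 < K - t_u := lt_of_lt_of_le hs0ρ (hρ_le _ hsbarA)
    have hSlne : Sl.Nonempty :=
      ⟨((F (K - t_u)).toReal - x0) / (K - t_u - s0), K - t_u, hsbar0, hFsbartop, rfl⟩
    have hSbdd : BddBelow Sl := ⟨mlb, hSlb⟩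
    set mst : ℝ := sInf Sl with hmstdef
    have hmneg : mst < 0 := by
      have hin : ((F (K - t_u)).toReal - x0) / (K - t_u - s0) ∈ Sl :=
        ⟨K - t_u, hsbar0, hFsbartop, rfl⟩
      have hle := csInf_le hSbdd hin
      have htr : (F (K - t_u)).toReal ≤ u := by
        have := EReal.toReal_le_toReal hFsbar (hFbot _) (EReal.coe_ne_top u)
        simpa using this
      have : ((F (K - t_u)).toReal - x0) / (K - t_u - s0) < 0 :=
        div_neg_of_neg_of_pos (by linarith) (by linarith)
      linarith
    have hmle : ∀ q ∈ Sl, mst ≤ q := fun q hq => csInf_le hSbdd hq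
    -- the key affine minorant
    have hkey : ∀ s : ℝ, ((x0 + mst * (s - s0) : ℝ) : EReal) ≤ F s := by
      intro s
      rcases lt_trichotomy s0 s with h | h | h
      · by_cases htop : F s = ⊤
        · rw [htop]; exact le_top
        have hq : mst ≤ ((F s).toReal - x0) / (s - s0) := hmle _ ⟨s, h, htop, rfl⟩
        rw [le_div_iff₀ (by linarith : (0:ℝ) < s - s0)] at hq
        calc ((x0 + mst * (s - s0) : ℝ) : EReal) ≤ (((F s).toReal : ℝ) : EReal) := by
              exact_mod_cast (by linarith : x0 + mst * (s - s0) ≤ (F s).toReal)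
          _ = F s := EReal.coe_toReal htop (hFbot s)
      · rw [← h, sub_self, mul_zero, add_zero]
        exact hx0F.le
      · by_contra hcon2
        rw [not_le] at hcon2
        have htop : F s ≠ ⊤ := fun ht => by
          rw [ht] at hcon2
          exact absurd hcon2 (by simp)
        obtain ⟨r, hFr⟩ : ∃ r : ℝ, F s = (r : EReal) :=
          ⟨_, (EReal.coe_toReal htop (hFbot s)).symm⟩
        have hr : r < x0 + mst * (s - s0) := by
          rw [hFr] at hcon2; exact_mod_cast hcon2
        obtain ⟨cg, hcg1, hcg2⟩ := EReal.exists_between_coe_real hx0F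
        have hcgx : x0 < cg := by exact_mod_cast hcg1
        set η : ℝ := (cg - x0) / (s0 - s) with hηdef
        have hη : 0 < η := div_pos (by linarith) (by linarith)
        have hlt : sInf Sl < mst + η := by rw [← hmstdef]; linarith
        obtain ⟨q, hqSl, hqlt⟩ := exists_lt_of_csInf_lt hSlne hlt
        obtain ⟨s', hs'0, hs'top, rfl⟩ := hqSl
        set t' : ℝ := (F s').toReal with ht'def
        have hFs' : F s' = (t' : EReal) := (EReal.coe_toReal hs'top (hFbot s')).symm
        have ht' : t' ≤ x0 + (mst + η) * (s' - s0) := by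
          rw [div_lt_iff₀ (by linarith : (0:ℝ) < s' - s0)] at hqlt
          linarith
        set θ : ℝ := (s' - s0) / (s' - s) with hθdef
        have hss' : s < s' := lt_trans h hs'0
        have hne2 : s' - s ≠ 0 := ne_of_gt (by linarith)
        have hne3 : s0 - s ≠ 0 := ne_of_gt (by linarith)
        have hθ0 : 0 < θ := div_pos (by linarith) (by linarith)
        have hθ1 : θ < 1 := by
          rw [hθdef, div_lt_one (by linarith)]
          linarith
        have hcomb : θ * s + (1 - θ) * s' = s0 := by
          rw [hθdef]; field_simp; ring
        have hconv := hFconv s s' θ (1 - θ) hθ0 (by linarith) (by ring) htop hs'top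
        rw [hcomb, hFr, hFs', ← EReal.coe_mul, ← EReal.coe_mul, ← EReal.coe_add] at hconv
        have hcg3 : cg < θ * r + (1 - θ) * t' := by
          have := lt_of_lt_of_le hcg2 hconv
          exact_mod_cast this
        -- derive contradiction
        have hwb : (1 - θ) * (s' - s0) ≤ s0 - s := by
          have hb1 : (1 - θ) * (s' - s) = s0 - s := by
            rw [hθdef]; field_simp; ring
          have hb2 : (1 - θ) * (s' - s0) ≤ (1 - θ) * (s' - s) :=
            mul_le_mul_of_nonneg_left (by linarith) (by linarith)
          linarith
        have hzero : θ * (s - s0) + (1 - θ) * (s' - s0) = 0 := by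
          linear_combination hcomb
        have e1 : θ * r ≤ θ * (x0 + mst * (s - s0)) :=
          mul_le_mul_of_nonneg_left hr.le hθ0.le
        have e2 : (1 - θ) * t' ≤ (1 - θ) * (x0 + (mst + η) * (s' - s0)) :=
          mul_le_mul_of_nonneg_left ht' (by linarith)
        have e3 : η * ((1 - θ) * (s' - s0)) ≤ η * (s0 - s) :=
          mul_le_mul_of_nonneg_left hwb hη.le
        have e4 : η * (s0 - s) = cg - x0 := by
          rw [hηdef]
          exact div_mul_cancel₀ _ hne3
        have e5 : mst * (θ * (s - s0)) + mst * ((1 - θ) * (s' - s0)) = 0 := by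
          linear_combination mst * hzero
        nlinarith [e1, e2, e3, e4, e5, hcg3]
    -- choose the multiplier
    set lam0 : ℝ := -(1 / mst) with hlamdef
    have hlam0 : 0 < lam0 := by
      rw [hlamdef]
      have : 1 / mst < 0 := one_div_neg.2 hmneg
      linarith
    have hlm : lam0 * mst = -1 := by
      have hne : mst ≠ 0 := ne_of_lt hmneg
      rw [hlamdef, neg_mul, one_div, inv_mul_cancel₀ hne]
    have hterm : ∀ s : ℝ, ((s0 + lam0 * x0 : ℝ) : EReal)
        ≤ (s : EReal) + (lam0 : EReal) * F s := by
      intro s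
      by_cases htop : F s = ⊤
      · rw [htop, EReal.coe_mul_top_of_pos hlam0, EReal.coe_add_top]
        exact le_top
      obtain ⟨r, hFr⟩ : ∃ r : ℝ, F s = (r : EReal) :=
        ⟨_, (EReal.coe_toReal htop (hFbot s)).symm⟩
      have hk := hkey s
      rw [hFr] at hk
      have hk' : x0 + mst * (s - s0) ≤ r := by exact_mod_cast hk
      rw [hFr, ← EReal.coe_mul, ← EReal.coe_add]
      have e : lam0 * (x0 + mst * (s - s0)) = lam0 * x0 - (s - s0) := by
        linear_combination (s - s0) * hlm
      have e2 := mul_le_mul_of_nonneg_left hk' hlam0.le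
      have : s0 + lam0 * x0 ≤ s + lam0 * r := by nlinarith
      exact_mod_cast this
    have hTlb : ((s0 : ℝ) : EReal) ≤
        (⨅ s : ℝ, ((s : EReal) + (lam0 : EReal) * F s)) - ((lam0 * x0 : ℝ) : EReal) := by
      have h1 : ((s0 + lam0 * x0 : ℝ) : EReal) ≤ ⨅ s : ℝ, ((s : EReal) + (lam0 : EReal) * F s) :=
        le_iInf hterm
      have h2 : ((s0 : ℝ) : EReal) = ((s0 + lam0 * x0 - lam0 * x0 : ℝ) : EReal) := by
        norm_num
      rw [h2, EReal.coe_sub]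
      exact EReal.sub_le_sub h1 le_rfl
    have hfin : ((s0 : ℝ) : EReal) ≤ ⨆ lam ∈ Set.Ioi (0:ℝ),
        ((⨅ s : ℝ, ((s : EReal) + (lam : EReal) * F s)) - ((lam * x0 : ℝ) : EReal)) := by
      refine hTlb.trans ?_
      exact le_iSup₂ (f := fun (lam : ℝ) (_ : lam ∈ Set.Ioi (0:ℝ)) =>
        ((⨅ s : ℝ, ((s : EReal) + (lam : EReal) * F s)) - ((lam * x0 : ℝ) : EReal)))
        lam0 (Set.mem_Ioi.2 hlam0)
    exact absurd hfin (not_le.2 hc1)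
  rw [hρdef]
  exact le_antisymm hstrong hweak
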